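/- Let g be the 19-uniform morphism on {0,1,2} defined by g(0) = 0120212012102120210, g(1) = 1201020120210201021, g(2) = 2012101201021012102 (a renaming of Dejean's morphism). For every n ≥ 1, the word g^n(0) is a palindrome of length 19^n that contains no factor of length p with period q satisfying p/q > 7/4. -/

import Mathlib

/-- A word `x` has period `q` (with `1 ≤ q ≤ |x|`) if `x[i] = x[i+q]`
whenever both indices are in range. -/
def HasPeriod {A : Type*} (x : List A) (q : ℕ) : Prop :=
  1 ≤ q ∧ q ≤ x.length ∧ ∀ i : ℕ, i + q < x.length → x[i]? = x[i + q]?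

/-- `w` contains an `e`-power: a nonempty factor of length `p` with period `q`
and `p/q ≥ e`. -/
def ContainsPowGe {A : Type*} (w : List A) (e : ℚ) : Prop :=
  ∃ x : List A, ∃ q : ℕ, x ≠ [] ∧ x <:+: w ∧ HasPeriod x q ∧
    e ≤ (x.length : ℚ) / (q : ℚ)

/-- `w` contains an `e⁺`-power: a nonempty factor of length `p` with period `q`
and `p/q > e`. -/
def ContainsPowGt {A : Type*} (w : List A) (e : ℚ) : Prop :=
  ∃ x : List A, ∃ q : ℕ, x ≠ [] ∧ x <:+: w ∧ HasPeriod x q ∧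
    e < (x.length : ℚ) / (q : ℚ)

/-- The critical exponent of `w` is exactly `e`: some nonempty factor has
exponent at least `e`, and no nonempty factor has exponent exceeding `e`. -/
def CritExpIs {A : Type*} (w : List A) (e : ℚ) : Prop :=
  ContainsPowGe w e ∧ ¬ ContainsPowGt w e

/-- Dejean's 19-uniform morphism on {0,1,2} (up to renaming of letters). -/
def dejean : List (Fin 3) → List (Fin 3) :=
  fun w => w.flatMap (fun a =>
    if a = 0 then [0, 1, 2, 0, 2, 1, 2, 0, 1, 2, 1, 0, 2, 1, 2, 0, 2, 1, 0]
    else if a = 1 then [1, 2, 0, 1, 0, 2, 0, 1, 2, 0, 2, 1, 0, 2, 0, 1, 0, 2, 1]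
    else [2, 0, 1, 2, 1, 0, 1, 2, 0, 1, 0, 2, 1, 0, 1, 2, 1, 0, 2])

/-! ### Auxiliary definitions and lemmas -/

/-- Letters of `dejean [0]`, with junk value `0` out of range. -/
def dd : ℕ → Fin 3 := fun r =>
  ([0, 1, 2, 0, 2, 1, 2, 0, 1, 2, 1, 0, 2, 1, 2, 0, 2, 1, 0] : List (Fin 3)).getD r 0

lemma dejean_cons (a : Fin 3) (w : List (Fin 3)) :
    dejean (a :: w) = dejean [a] ++ dejean w := by simp [dejean]

lemma dejean_append (u v : List (Fin 3)) : dejean (u ++ v) = dejean u ++ dejean v := by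
  simp [dejean]

lemma length_dejean_single : ∀ a : Fin 3, (dejean [a]).length = 19 := by decide

lemma length_dejean (w : List (Fin 3)) : (dejean w).length = 19 * w.length := by
  induction w with
  | nil => simp [dejean]
  | cons a w ih =>
    rw [dejean_cons, List.length_append, ih, length_dejean_single]
    simp [List.length_cons]; ring

lemma key_single : ∀ a : Fin 3, ∀ t : Fin 19, (dejean [a])[t.val]? = some (dd t.val + a) := by
  decide

/-- The key formula for letters of images under `dejean`. -/
lemma key (w : List (Fin 3)) (t : ℕ) :
    (dejean w)[t]? = (w[t / 19]?).map (fun a => dd (t % 19) + a) := by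
  induction w generalizing t with
  | nil => simp [dejean]
  | cons a w ih =>
    rw [dejean_cons]
    by_cases ht : t < 19
    · rw [List.getElem?_append_left (by rw [length_dejean_single]; exact ht)]
      have h1 : t / 19 = 0 := by omega
      have h2 : t % 19 = t := by omega
      rw [h1, h2]
      simpa using key_single a ⟨t, ht⟩
    · rw [List.getElem?_append_right (by rw [length_dejean_single]; omega)]
      rw [length_dejean_single, ih (t - 19)]
      have h1 : (t - 19) % 19 = t % 19 := by omega
      have h2 : t / 19 = (t - 19) / 19 + 1 := by omega
      rw [h1, h2, List.getElem?_cons_succ]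

lemma rev_single : ∀ a : Fin 3, (dejean [a]).reverse = dejean [a] := by decide

lemma dejean_reverse (w : List (Fin 3)) : (dejean w).reverse = dejean w.reverse := by
  induction w with
  | nil => simp [dejean]
  | cons a w ih =>
    rw [dejean_cons, List.reverse_append, ih, rev_single, List.reverse_cons,
      dejean_append]

/-- All factors of length at most 4 of the Dejean word. -/
def S : List (List (Fin 3)) := [
  [], [0], [1], [2],
  [0, 1], [0, 2], [1, 0], [1, 2], [2, 0], [2, 1],
  [0, 1, 0], [0, 1, 2], [0, 2, 0], [0, 2, 1], [1, 0, 1], [1, 0, 2],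
  [1, 2, 0], [1, 2, 1], [2, 0, 1], [2, 0, 2], [2, 1, 0], [2, 1, 2],
  [0, 1, 0, 2], [0, 1, 2, 0], [0, 1, 2, 1], [0, 2, 0, 1], [0, 2, 1, 0],
  [0, 2, 1, 2], [1, 0, 1, 2], [1, 0, 2, 0], [1, 0, 2, 1], [1, 2, 0, 1],
  [1, 2, 0, 2], [1, 2, 1, 0], [2, 0, 1, 0], [2, 0, 1, 2], [2, 0, 2, 1],
  [2, 1, 0, 1], [2, 1, 0, 2], [2, 1, 2, 0]]

def Fact4 (w : List (Fin 3)) : Prop := ∀ v, v <:+: w → v.length ≤ 4 → v ∈ S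

lemma closureS : ∀ v ∈ S, v.length ≤ 2 → ∀ k < 39, ∀ L < 5,
    ((dejean v).drop k).take L ∈ S := by decide

lemma delta2 : ∀ r < 19, r ≠ 0 → ∀ c < 19, ∃ j < 9,
    (c + j) % 19 ≠ 18 ∧ (c + j) % 19 ≠ 18 - r ∧
    dd ((c + j) % 19 + 1) - dd ((c + j) % 19) ≠
      dd (((c + j) % 19 + r) % 19 + 1) - dd (((c + j) % 19 + r) % 19) := by decide

set_option maxHeartbeats 1600000 in
lemma shortchk : ∀ v ∈ S, v.length ≤ 2 → ∀ q : Fin 12, ∀ pp : Fin 21, ∀ k : Fin 19,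
    (1 ≤ (q : ℕ) ∧ (q : ℕ) < (pp : ℕ) ∧ (pp : ℕ) ≤ (q : ℕ) + 9 ∧
      7 * (q : ℕ) < 4 * (pp : ℕ) ∧ (k : ℕ) + (pp : ℕ) ≤ (dejean v).length) →
    ∃ i < (pp : ℕ), i + (q : ℕ) < (pp : ℕ) ∧
      (dejean v)[(k : ℕ) + i]? ≠ (dejean v)[(k : ℕ) + i + (q : ℕ)]? := by decide

lemma infix_drop_take {α : Type*} (l : List α) (k m : ℕ) : (l.drop k).take m <:+: l :=
  ⟨l.take k, (l.drop k).drop m, by simp⟩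

lemma drop_take_dejean (w : List (Fin 3)) (j0 m : ℕ) (h : j0 + m ≤ w.length) :
    dejean ((w.drop j0).take m) = ((dejean w).drop (19 * j0)).take (19 * m) := by
  have hw : w = w.take j0 ++ ((w.drop j0).take m ++ (w.drop j0).drop m) := by
    rw [List.take_append_drop, List.take_append_drop]
  have hlen1 : (dejean (w.take j0)).length = 19 * j0 := by
    rw [length_dejean, List.length_take]; omega
  have hlen2 : (dejean ((w.drop j0).take m)).length = 19 * m := by
    rw [length_dejean, List.length_take, List.length_drop]; omega
  conv_rhs => rw [hw]
  rw [dejean_append, dejean_append, List.drop_left' hlen1, List.take_left' hlen2]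

/-- Pull back a factor of `dejean w` to a factor of the image of a short factor of `w`. -/
lemma pullback (w pre x post : List (Fin 3))
    (hw : dejean w = pre ++ (x ++ post)) (j0 m : ℕ)
    (h1 : 19 * j0 ≤ pre.length) (h2 : pre.length + x.length ≤ 19 * (j0 + m))
    (h3 : j0 + m ≤ w.length) :
    x = ((dejean ((w.drop j0).take m)).drop (pre.length - 19 * j0)).take x.length := by
  rw [drop_take_dejean w j0 m h3, List.drop_take, List.drop_drop, List.take_take]
  have e1 : 19 * j0 + (pre.length - 19 * j0) = pre.length := by omega
  have e2 : min x.length (19 * m - (pre.length - 19 * j0)) = x.length := by omega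
  rw [e1, e2, hw, List.drop_left, List.take_left]

lemma cpg_iff (w : List (Fin 3)) : ContainsPowGt w (7/4 : ℚ) ↔
    ∃ x q, x ≠ [] ∧ x <:+: w ∧ HasPeriod x q ∧ 7 * q < 4 * x.length := by
  constructor
  · rintro ⟨x, q, h1, h2, h3, h4⟩
    refine ⟨x, q, h1, h2, h3, ?_⟩
    have hq : 0 < q := h3.1
    rw [div_lt_div_iff₀ (by norm_num) (by exact_mod_cast hq)] at h4
    have : (7 * q : ℚ) < 4 * x.length := by linarith
    exact_mod_cast this
  · rintro ⟨x, q, h1, h2, h3, h4⟩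
    refine ⟨x, q, h1, h2, h3, ?_⟩
    have hq : 0 < q := h3.1
    rw [div_lt_div_iff₀ (by norm_num) (by exact_mod_cast hq)]
    have : (7 * q : ℚ) < 4 * x.length := by exact_mod_cast h4
    linarith

/-- Factors of length at most 4 are preserved by `dejean`. -/
lemma fact4_dejean (w : List (Fin 3)) (h4 : Fact4 w) : Fact4 (dejean w) := by
  intro v hv hlen
  rcases eq_or_ne v [] with rfl | hne
  · decide
  obtain ⟨pre, post, hw0⟩ := hv
  have hw : dejean w = pre ++ (v ++ post) := by rw [← List.append_assoc, hw0]
  have hp : 1 ≤ v.length := List.length_pos_iff.mpr hne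
  have hsp : pre.length + v.length ≤ 19 * w.length := by
    have := congrArg List.length hw
    rw [length_dejean] at this
    simp [List.length_append] at this
    omega
  set s := pre.length with hs
  set p := v.length with hpdef
  set j0 := s / 19 with hj0
  set m := (s + p - 1) / 19 - j0 + 1 with hm
  have hrep := pullback w pre v post hw j0 m (by omega) (by omega) (by omega)
  have hv'S : (w.drop j0).take m ∈ S := by
    refine h4 _ (infix_drop_take w j0 m) ?_
    have : ((w.drop j0).take m).length ≤ m := List.length_take_le m _
    omega
  have hv'len : ((w.drop j0).take m).length ≤ 2 := by
    have : ((w.drop j0).take m).length ≤ m := List.length_take_le m _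
    omega
  rw [hrep]
  exact closureS _ hv'S hv'len _ (by omega) _ (by omega)

/-- The main transfer lemma: `dejean` preserves `(7/4)⁺`-freeness. -/
lemma free_dejean (w : List (Fin 3)) (h4 : Fact4 w)
    (hfree : ¬ ContainsPowGt w (7/4 : ℚ)) : ¬ ContainsPowGt (dejean w) (7/4 : ℚ) := by
  rw [cpg_iff]
  rintro ⟨x, q, hne, hinf, ⟨hq1, hqle, hper⟩, hlt⟩
  obtain ⟨pre, post, hw0⟩ := hinf
  have hw : dejean w = pre ++ (x ++ post) := by rw [← List.append_assoc, hw0]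
  set s := pre.length with hs
  set p := x.length with hpdef
  have hp : 1 ≤ p := List.length_pos_iff.mpr hne
  have hqp : q < p := by omega
  have hsp : s + p ≤ 19 * w.length := by
    have := congrArg List.length hw
    rw [length_dejean] at this
    simp [List.length_append] at this
    omega
  -- the basic periodicity equation, transported to `dejean w`
  have hE : ∀ t, s ≤ t → t + q < s + p →
      dd (t % 19) + w.getD (t / 19) 0 = dd ((t + q) % 19) + w.getD ((t + q) / 19) 0 := by
    intro t h1 h2
    have hx1 : x[t - s]? = x[t - s + q]? := hper (t - s) (by omega)
    have e1 : (dejean w)[t]? = x[t - s]? := by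
      rw [hw, List.getElem?_append_right (by omega : pre.length ≤ t),
        List.getElem?_append_left (by omega : t - pre.length < x.length)]
    have e2 : (dejean w)[t + q]? = x[t - s + q]? := by
      rw [hw, List.getElem?_append_right (by omega : pre.length ≤ t + q),
        List.getElem?_append_left (by omega : t + q - pre.length < x.length)]
      congr 1
      omega
    have e3 : (dejean w)[t]? = (dejean w)[t + q]? := by rw [e1, e2, hx1]
    rw [key, key] at e3
    have hb1 : t / 19 < w.length := by omega
    have hb2 : (t + q) / 19 < w.length := by omega
    rw [List.getElem?_eq_getElem hb1, List.getElem?_eq_getElem hb2] at e3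
    simp only [Option.map_some, Option.some.injEq] at e3
    rw [List.getD_eq_getElem _ _ hb1, List.getD_eq_getElem _ _ hb2]
    exact e3
  by_cases hq19 : q % 19 = 0
  -- Case A : the period is a multiple of 19; pull the power back through `dejean`.
  · set q' := q / 19 with hq'
    set j0 := s / 19 with hj0
    set m := (s + p - 1) / 19 - j0 + 1 with hm
    set v := (w.drop j0).take m with hv
    have hvlen : v.length = m := by
      rw [hv]; simp [List.length_take, List.length_drop]; omega
    apply hfree
    rw [cpg_iff]
    refine ⟨v, q', ?_, infix_drop_take w j0 m, ⟨by omega, by omega, ?_⟩, by omega⟩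
    · intro h
      rw [h] at hvlen
      simp at hvlen
    · intro i hi
      rw [hvlen] at hi
      have hgi : ∀ jj, jj < m → v[jj]? = w[j0 + jj]? := by
        intro jj hjj
        rw [hv, List.getElem?_take, if_pos hjj, List.getElem?_drop]
      rw [hgi i (by omega), hgi (i + q') (by omega)]
      have hb1 : j0 + i < w.length := by omega
      have hb2 : j0 + (i + q') < w.length := by omega
      rw [List.getElem?_eq_getElem hb1, List.getElem?_eq_getElem hb2]
      have hEt := hE (max (19 * (j0 + i)) s) (le_max_right _ _) (by omega)
      have m1 : (max (19 * (j0 + i)) s + q) % 19 = (max (19 * (j0 + i)) s) % 19 := by omega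
      have m2 : (max (19 * (j0 + i)) s) / 19 = j0 + i := by omega
      have m3 : (max (19 * (j0 + i)) s + q) / 19 = j0 + (i + q') := by omega
      rw [m1, m2, m3] at hEt
      have := add_left_cancel hEt
      rw [List.getD_eq_getElem _ _ hb1, List.getD_eq_getElem _ _ hb2] at this
      rw [this]
  -- Case B : the period is not a multiple of 19.
  · by_cases hpq : q + 10 ≤ p
    -- B long: at least 10 positions of periodicity; contradiction via `delta2`.
    · obtain ⟨j, hj9, hu18, hu18r, hdne⟩ :=
        delta2 (q % 19) (by omega) (by omega) (s % 19) (by omega)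
      set t := s + j with ht
      have hu : t % 19 = (s % 19 + j) % 19 := by omega
      have h1 := hE t (by omega) (by omega)
      have h2 := hE (t + 1) (by omega) (by omega)
      apply hdne
      have m1 : (t + 1) % 19 = (s % 19 + j) % 19 + 1 := by omega
      have m2 : (t + 1) / 19 = t / 19 := by omega
      have m3 : (t + q) % 19 = ((s % 19 + j) % 19 + q % 19) % 19 := by omega
      have m4 : (t + 1 + q) % 19 = ((s % 19 + j) % 19 + q % 19) % 19 + 1 := by omega
      have m5 : (t + 1 + q) / 19 = (t + q) / 19 := by omega
      rw [hu, m3] at h1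
      rw [m1, m2, m4, m5] at h2
      letI := Fin.instCommRing 3
      linear_combination h2 - h1
    -- B short: the power lives inside the image of a factor of length at most 2.
    · have hq11 : q ≤ 11 := by omega
      set j0 := s / 19 with hj0
      set m := (s + p - 1) / 19 - j0 + 1 with hm
      set v := (w.drop j0).take m with hv
      have hrep := pullback w pre x post hw j0 m (by omega) (by omega) (by omega)
      have hvS : v ∈ S := by
        refine h4 _ (infix_drop_take w j0 m) ?_
        have : v.length ≤ m := List.length_take_le m _
        omega
      have hdvlen : s - 19 * j0 + p ≤ (dejean v).length := by
        rw [hv, length_dejean, List.length_take, List.length_drop]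
        omega
      have hguard : 1 ≤ q ∧ q < p ∧ p ≤ q + 9 ∧ 7 * q < 4 * p ∧
          s - 19 * j0 + p ≤ (dejean v).length := ⟨by omega, by omega, by omega, by omega, hdvlen⟩
      obtain ⟨i, hip, hiq, hneq⟩ :=
        shortchk v hvS (by have : v.length ≤ m := List.length_take_le m _; omega)
          ⟨q, by omega⟩ ⟨p, by omega⟩ ⟨s - 19 * j0, by omega⟩ hguard
      have hip' : i < p := hip
      have hiq' : i + q < p := hiq
      have hneq' : (dejean v)[s - 19 * j0 + i]? ≠ (dejean v)[s - 19 * j0 + i + q]? := hneq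
      have hgx : ∀ jj, jj < p → x[jj]? = (dejean v)[s - 19 * j0 + jj]? := by
        intro jj hjj
        conv_lhs => rw [hrep]
        rw [List.getElem?_take, if_pos hjj, List.getElem?_drop]
      have e := hper i (by omega)
      rw [hgx i (by omega), hgx (i + q) (by omega), ← Nat.add_assoc] at e
      exact hneq' e

lemma fact4_zero : Fact4 [0] := by
  intro v hv hlen
  have hle : v.length ≤ 1 := hv.length_le
  match v, hle with
  | [], _ => decide
  | [a], _ =>
    have ha : a ∈ ([0] : List (Fin 3)) := hv.sublist.mem (by simp)
    simp at ha
    subst ha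
    decide

lemma free_single : ¬ ContainsPowGt [(0 : Fin 3)] (7/4 : ℚ) := by
  rw [cpg_iff]
  rintro ⟨x, q, hne, hinf, ⟨hq1, hqle, -⟩, hlt⟩
  have := hinf.length_le
  simp at this
  omega

lemma main_invariant (n : ℕ) :
    Fact4 (dejean^[n] [0]) ∧ ¬ ContainsPowGt (dejean^[n] [0]) (7/4 : ℚ) := by
  induction n with
  | zero => exact ⟨fact4_zero, free_single⟩
  | succ n ih =>
    rw [Function.iterate_succ_apply']
    exact ⟨fact4_dejean _ ih.1, free_dejean _ ih.1 ih.2⟩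

lemma pal_iter (n : ℕ) : (dejean^[n] [0]).reverse = dejean^[n] [0] := by
  induction n with
  | zero => rfl
  | succ n ih =>
    rw [Function.iterate_succ_apply', dejean_reverse, ih]

lemma len_iter (n : ℕ) : (dejean^[n] [0]).length = 19 ^ n := by
  induction n with
  | zero => rfl
  | succ n ih =>
    rw [Function.iterate_succ_apply', length_dejean, ih, pow_succ]
    ring

theorem dejean_iterate_palindrome_avoids (n : ℕ) (hn : 1 ≤ n) :
    ((dejean^[n]) [0]).reverse = (dejean^[n]) [0] ∧
    ((dejean^[n]) [0]).length = 19 ^ n ∧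
    ¬ ContainsPowGt ((dejean^[n]) [0]) (7 / 4) := by
  exact ⟨pal_iter n, len_iter n, (main_invariant n).2⟩
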